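/- Let Y be a set, F : Y → Y a map, τ : Y → {1,2,3,…}, and let τ̄ > 0 be a real number. Define τ_k(y) = Σ_{j=0}^{k−1} τ(F^j y) (with τ_0 = 0). For each pair (y,ℓ) with y ∈ Y and 0 ≤ ℓ < τ(y), and each n ≥ 1, let N_n(y,ℓ) be the unique nonnegative integer satisfying τ_{N_n(y,ℓ)}(y) ≤ n + ℓ < τ_{N_n(y,ℓ)+1}(y). Then for every such (y,ℓ) and every n ≥ 1: max_{1≤k≤n} | k/τ̄ − N_k(y,ℓ) | ≤ τ̄^{−1} ( max_{0≤j≤n} |τ_j(y) − j τ̄| + max_{0≤j≤n} τ(F^j y) ). -/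

import Mathlib

/-- Deterministic estimate for the lap number `N_n(y,ℓ)` of the tower
with return time `τ ≥ 1`: for all `1 ≤ k ≤ n`,
`|k/τ̄ − N_k(y,ℓ)| ≤ τ̄⁻¹ (max_{0≤j≤n} |τ_j(y) − j τ̄| + max_{0≤j≤n} τ(F^j y))`. -/
theorem stmt9 {Y : Type*} (F : Y → Y) (τ : Y → ℕ) (hτ : ∀ y, 1 ≤ τ y)
    (τb : ℝ) (hτb : 0 < τb)
    (N : ℕ → Y → ℕ → ℕ)
    (hN : ∀ n : ℕ, 1 ≤ n → ∀ y : Y, ∀ ℓ : ℕ, ℓ < τ y →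
      (∑ j ∈ Finset.range (N n y ℓ), τ (F^[j] y)) ≤ n + ℓ ∧
        n + ℓ < ∑ j ∈ Finset.range (N n y ℓ + 1), τ (F^[j] y)) :
    ∀ y : Y, ∀ ℓ : ℕ, ℓ < τ y → ∀ n : ℕ, ∀ hn : 1 ≤ n,
      (Finset.Icc 1 n).sup' (Finset.nonempty_Icc.mpr hn)
          (fun k => |(k : ℝ) / τb - (N k y ℓ : ℝ)|)
        ≤ τb⁻¹ *
          ((Finset.range (n + 1)).sup' Finset.nonempty_range_add_one
              (fun j => |(∑ i ∈ Finset.range j, (τ (F^[i] y) : ℝ)) - (j : ℝ) * τb|)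
            + (Finset.range (n + 1)).sup' Finset.nonempty_range_add_one
              (fun j => (τ (F^[j] y) : ℝ))) := by
  intro y ℓ hℓ n hn
  set A := (Finset.range (n + 1)).sup' Finset.nonempty_range_add_one
      (fun j => |(∑ i ∈ Finset.range j, (τ (F^[i] y) : ℝ)) - (j : ℝ) * τb|) with hAdef
  set B := (Finset.range (n + 1)).sup' Finset.nonempty_range_add_one
      (fun j => (τ (F^[j] y) : ℝ)) with hBdef
  apply Finset.sup'_le
  intro k hk
  obtain ⟨hk1, hkn⟩ := Finset.mem_Icc.mp hk
  obtain ⟨h1, h2⟩ := hN k hk1 y ℓ hℓ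
  set m := N k y ℓ with hm
  -- m ≤ k
  have hmk : m ≤ k := by
    by_contra h
    push_neg at h
    obtain ⟨m', hm'⟩ : ∃ m', m = m' + 1 := ⟨m - 1, by omega⟩
    rw [hm', Finset.sum_range_succ'] at h1
    have hterm : m' ≤ ∑ i ∈ Finset.range m', τ (F^[i + 1] y) := by
      calc m' = ∑ _i ∈ Finset.range m', 1 := by simp
        _ ≤ _ := Finset.sum_le_sum fun i _ => hτ _
    simp only [Function.iterate_zero, id_eq] at h1
    omega
  have hmn : m ≤ n := le_trans hmk hkn
  -- bounds from sups
  have hA : |(∑ i ∈ Finset.range m, (τ (F^[i] y) : ℝ)) - (m : ℝ) * τb| ≤ A := by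
    rw [hAdef]; exact Finset.le_sup' (fun j => |(∑ i ∈ Finset.range j, (τ (F^[i] y) : ℝ)) - (j : ℝ) * τb|) (Finset.mem_range.mpr (Nat.lt_succ_of_le hmn))
  have hB1 : (τ (F^[m] y) : ℝ) ≤ B := by
    rw [hBdef]; exact Finset.le_sup' (fun j => (τ (F^[j] y) : ℝ)) (Finset.mem_range.mpr (Nat.lt_succ_of_le hmn))
  have hB2 : (τ (F^[0] y) : ℝ) ≤ B := by
    rw [hBdef]; exact Finset.le_sup' (fun j => (τ (F^[j] y) : ℝ)) (Finset.mem_range.mpr (Nat.succ_pos n))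
  simp only [Function.iterate_zero, id_eq] at hB2
  have hℓB : (ℓ : ℝ) ≤ B := by
    have : (ℓ : ℝ) ≤ (τ y : ℝ) := by exact_mod_cast hℓ.le
    linarith
  -- cast the defining inequalities
  rw [Finset.sum_range_succ] at h2
  have e1 : (∑ i ∈ Finset.range m, (τ (F^[i] y) : ℝ)) ≤ (k : ℝ) + ℓ := by
    exact_mod_cast h1
  have e2 : (k : ℝ) + ℓ < (∑ i ∈ Finset.range m, (τ (F^[i] y) : ℝ)) + τ (F^[m] y) := by
    exact_mod_cast h2
  have hA' := abs_le.mp hA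
  have key : |(k : ℝ) - (m : ℝ) * τb| ≤ A + B := by
    rw [abs_le]
    constructor <;> [linarith [hA'.2]; linarith [hA'.1]]
  have hdiv : (k : ℝ) / τb - (m : ℝ) = ((k : ℝ) - (m : ℝ) * τb) / τb := by
    field_simp
  rw [hdiv, abs_div, abs_of_pos hτb, div_le_iff₀ hτb]
  have : τb⁻¹ * (A + B) * τb = A + B := by field_simp
  linarith
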